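/- (Choice coupling.) Let μ₁, μ₂ be sub-distributions over A₁, A₂, P ⊆ A₁ a predicate, and suppose there are (ε,δ)-approximate liftings of relations R and S relating μ₁ and μ₂, such that R(P) ∩ S(A₁∖P) = ∅, where R(P) is the image of P under R. Then there is an (ε, 2δ)-approximate lifting relating μ₁ and μ₂ of the relation T = {(a₁,a₂) : (a₁ ∈ P → (a₁,a₂) ∈ R) ∧ (a₁ ∉ P → (a₁,a₂) ∈ S)}. -/

import Mathlib

open scoped ENNReal

noncomputable section

/-- A discrete sub-distribution: total mass at most 1. -/
def IsSubDist {A : Type*} (μ : A → ℝ≥0∞) : Prop := ∑' a, μ a ≤ 1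

/-- Mass of a set under `μ`. -/
def setSum {A : Type*} (μ : A → ℝ≥0∞) (S : Set A) : ℝ≥0∞ := ∑' a : S, μ (a : A)

/-- `μ` is a coupling of `(μ₁, μ₂)`: a joint sub-distribution with the given marginals. -/
def IsCoupling {A₁ A₂ : Type*} (μ : A₁ × A₂ → ℝ≥0∞)
    (μ₁ : A₁ → ℝ≥0∞) (μ₂ : A₂ → ℝ≥0∞) : Prop :=
  IsSubDist μ ∧ (∀ a₁, ∑' a₂, μ (a₁, a₂) = μ₁ a₁) ∧ (∀ a₂, ∑' a₁, μ (a₁, a₂) = μ₂ a₂)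

/-- Image of a set under a relation. -/
def relImage {A₁ A₂ : Type*} (R : Set (A₁ × A₂)) (S : Set A₁) : Set A₂ :=
  {a₂ | ∃ a₁ ∈ S, (a₁, a₂) ∈ R}

/-- `R⋆ = R ∪ (A₁ × {⋆}) ∪ ({⋆} × A₂)`, with `⋆` modelled by `none`. -/
def starRel {A₁ A₂ : Type*} (R : Set (A₁ × A₂)) : Set (Option A₁ × Option A₂) :=
  {p | match p with
       | (some a₁, some a₂) => (a₁, a₂) ∈ R
       | (some _, none) => True
       | (none, some _) => True
       | (none, none) => False}

/-- `(ε, δ)`-approximate `R`-lifting of `(μ₁, μ₂)`, witnessed by two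
sub-distributions over `A₁⋆ × A₂⋆` with marginal, support, and ε-distance conditions. -/
def ApproxLift {A₁ A₂ : Type*} (ε δ : ℝ) (R : Set (A₁ × A₂))
    (μ₁ : A₁ → ℝ≥0∞) (μ₂ : A₂ → ℝ≥0∞) : Prop :=
  ∃ μL μR : Option A₁ × Option A₂ → ℝ≥0∞,
    IsSubDist μL ∧ IsSubDist μR ∧
    (∀ a₁, ∑' o, μL (some a₁, o) = μ₁ a₁) ∧ (∀ o, μL (none, o) = 0) ∧
    (∀ a₂, ∑' o, μR (o, some a₂) = μ₂ a₂) ∧ (∀ o, μR (o, none) = 0) ∧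
    {p | μL p ≠ 0} ⊆ starRel R ∧ {p | μR p ≠ 0} ⊆ starRel R ∧
    ∀ S : Set (Option A₁ × Option A₂),
      setSum μL S ≤ ENNReal.ofReal (Real.exp ε) * setSum μR S + ENNReal.ofReal δ

/-- Splitting a `tsum` over an `Option` type. -/
lemma tsum_option_ennreal {α : Type*} (f : Option α → ℝ≥0∞) :
    ∑' o, f o = f none + ∑' a, f (some a) := by
  have h1 : (({none} : Set (Option α))ᶜ : Set (Option α)) = Set.range (some : α → Option α) := by
    ext o; cases o <;> simp
  calc ∑' o, f o
      = (∑' x : ({none} : Set (Option α)), f x)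
        + ∑' x : (({none} : Set (Option α))ᶜ : Set (Option α)), f x :=
        (Summable.tsum_add_tsum_compl ENNReal.summable ENNReal.summable).symm
    _ = f none + ∑' a, f (some a) := by
        rw [tsum_singleton, h1, tsum_range f (Option.some_injective α)]

theorem choice_coupling {A₁ A₂ : Type*} [Countable A₁] [Countable A₂]
    (μ₁ : A₁ → ℝ≥0∞) (μ₂ : A₂ → ℝ≥0∞)
    (h₁ : IsSubDist μ₁) (h₂ : IsSubDist μ₂)
    (P : Set A₁) (R S : Set (A₁ × A₂)) (ε δ : ℝ)
    (hR : ApproxLift ε δ R μ₁ μ₂) (hS : ApproxLift ε δ S μ₁ μ₂)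
    (hdisj : relImage R P ∩ relImage S Pᶜ = ∅) :
    ApproxLift ε (2 * δ)
      {p : A₁ × A₂ | (p.1 ∈ P → p ∈ R) ∧ (p.1 ∉ P → p ∈ S)} μ₁ μ₂ := by
  classical
  obtain ⟨μLR, μRR, hLRsub, hRRsub, hLRm, hLRn, hRRm, hRRn, hLRsupp, hRRsupp, hRdist⟩ := hR
  obtain ⟨μLS, μRS, hLSsub, hRSsub, hLSm, hLSn, hRSm, hRSn, hLSsupp, hRSsupp, hSdist⟩ := hS
  -- the combined left witness
  set μL : Option A₁ × Option A₂ → ℝ≥0∞ :=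
    fun p => Option.elim p.1 0 (fun a₁ => if a₁ ∈ P then μLR p else μLS p) with hμL
  -- the mass already placed at (some ·, some a₂)
  set f : A₂ → ℝ≥0∞ :=
    fun a₂ => ∑' a₁, (if a₁ ∈ P then μRR (some a₁, some a₂) else μRS (some a₁, some a₂))
    with hfdef
  -- the combined right witness
  set μR : Option A₁ × Option A₂ → ℝ≥0∞ :=
    fun p => Option.elim p.1 (Option.elim p.2 0 (fun a₂ => μ₂ a₂ - f a₂))
      (fun a₁ => if a₁ ∈ P then μRR p else μRS p) with hμR
  -- basic facts about the supports of the given witnesses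
  have hRRz : ∀ a₁ a₂, (a₁, a₂) ∉ R → μRR (some a₁, some a₂) = 0 := by
    intro a₁ a₂ h
    by_contra hne
    exact h (hRRsupp hne)
  have hRSz : ∀ a₁ a₂, (a₁, a₂) ∉ S → μRS (some a₁, some a₂) = 0 := by
    intro a₁ a₂ h
    by_contra hne
    exact h (hRSsupp hne)
  -- the key bound coming from the disjointness hypothesis
  have hf : ∀ a₂, f a₂ ≤ μ₂ a₂ := by
    intro a₂
    by_cases hmem : a₂ ∈ relImage R P
    · have hz : ∀ a₁, a₁ ∉ P → μRS (some a₁, some a₂) = 0 := by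
        intro a₁ hP
        apply hRSz
        intro hSmem
        have : a₂ ∈ relImage R P ∩ relImage S Pᶜ := ⟨hmem, a₁, hP, hSmem⟩
        rw [hdisj] at this
        exact this
      calc f a₂ ≤ ∑' a₁, μRR (some a₁, some a₂) := by
              apply ENNReal.tsum_le_tsum
              intro a₁
              by_cases hP : a₁ ∈ P
              · simp [hfdef, hP]
              · simp [hfdef, hP, hz a₁ hP]
        _ ≤ ∑' o, μRR (o, some a₂) := by
              rw [tsum_option_ennreal (fun o => μRR (o, some a₂))]
              exact le_add_self
        _ = μ₂ a₂ := hRRm a₂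
    · have hz : ∀ a₁, a₁ ∈ P → μRR (some a₁, some a₂) = 0 := by
        intro a₁ hP
        apply hRRz
        intro hRmem
        exact hmem ⟨a₁, hP, hRmem⟩
      calc f a₂ ≤ ∑' a₁, μRS (some a₁, some a₂) := by
              apply ENNReal.tsum_le_tsum
              intro a₁
              by_cases hP : a₁ ∈ P
              · simp [hfdef, hP, hz a₁ hP]
              · simp [hfdef, hP]
        _ ≤ ∑' o, μRS (o, some a₂) := by
              rw [tsum_option_ennreal (fun o => μRS (o, some a₂))]
              exact le_add_self
        _ = μ₂ a₂ := hRSm a₂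
  -- marginals of μL
  have hμLm : ∀ a₁, ∑' o, μL (some a₁, o) = μ₁ a₁ := by
    intro a₁
    by_cases hP : a₁ ∈ P
    · simp only [hμL, Option.elim, hP, if_pos]
      exact hLRm a₁
    · simp only [hμL, Option.elim, hP, if_neg, if_false]
      exact hLSm a₁
  have hμLn : ∀ o, μL (none, o) = 0 := fun o => rfl
  -- marginals of μR
  have hμRn : ∀ o, μR (o, none) = 0 := by
    intro o
    rcases o with _ | a₁
    · rfl
    · simp only [hμR, Option.elim]
      by_cases hP : a₁ ∈ P <;> simp [hP, hRRn, hRSn]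
  have hμRsome : ∀ a₂, ∑' a₁, μR (some a₁, some a₂) = f a₂ := by
    intro a₂
    rfl
  have hμRm : ∀ a₂, ∑' o, μR (o, some a₂) = μ₂ a₂ := by
    intro a₂
    rw [tsum_option_ennreal (fun o => μR (o, some a₂))]
    have : μR (none, some a₂) = μ₂ a₂ - f a₂ := rfl
    rw [this, hμRsome a₂]
    exact tsub_add_cancel_of_le (hf a₂)
  refine ⟨μL, μR, ?_, ?_, hμLm, hμLn, hμRm, hμRn, ?_, ?_, ?_⟩
  -- μL is a sub-distribution
  · unfold IsSubDist
    rw [ENNReal.tsum_prod']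
    rw [tsum_option_ennreal (fun o => ∑' b, μL (o, b))]
    have h0 : ∑' b, μL (none, b) = 0 := by simp [hμLn]
    rw [h0, zero_add]
    calc ∑' a₁, ∑' b, μL (some a₁, b) = ∑' a₁, μ₁ a₁ := by
          exact tsum_congr fun a₁ => hμLm a₁
      _ ≤ 1 := h₁
  -- μR is a sub-distribution
  · unfold IsSubDist
    rw [ENNReal.tsum_prod', ENNReal.tsum_comm]
    rw [tsum_option_ennreal (fun b => ∑' o, μR (o, b))]
    have h0 : ∑' o, μR (o, none) = 0 := by simp [hμRn]
    rw [h0, zero_add]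
    calc ∑' a₂, ∑' o, μR (o, some a₂) = ∑' a₂, μ₂ a₂ := tsum_congr fun a₂ => hμRm a₂
      _ ≤ 1 := h₂
  -- support of μL
  · rintro ⟨o, b⟩ hp
    rcases o with _ | a₁
    · exact absurd rfl hp
    · rcases b with _ | a₂
      · trivial
      · by_cases hP : a₁ ∈ P
        · have hne : μLR (some a₁, some a₂) ≠ 0 := by
            simpa [hμL, hP] using hp
          have hRmem : (a₁, a₂) ∈ R := hLRsupp hne
          exact ⟨fun _ => hRmem, fun h => absurd hP h⟩
        · have hne : μLS (some a₁, some a₂) ≠ 0 := by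
            simpa [hμL, hP] using hp
          have hSmem : (a₁, a₂) ∈ S := hLSsupp hne
          exact ⟨fun h => absurd h hP, fun _ => hSmem⟩
  -- support of μR
  · rintro ⟨o, b⟩ hp
    rcases o with _ | a₁
    · rcases b with _ | a₂
      · exact absurd rfl hp
      · trivial
    · rcases b with _ | a₂
      · trivial
      · by_cases hP : a₁ ∈ P
        · have hne : μRR (some a₁, some a₂) ≠ 0 := by
            simpa [hμR, hP] using hp
          have hRmem : (a₁, a₂) ∈ R := hRRsupp hne
          exact ⟨fun _ => hRmem, fun h => absurd hP h⟩
        · have hne : μRS (some a₁, some a₂) ≠ 0 := by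
            simpa [hμR, hP] using hp
          have hSmem : (a₁, a₂) ∈ S := hRSsupp hne
          exact ⟨fun h => absurd h hP, fun _ => hSmem⟩
  -- the distance condition
  · intro U
    set U1 : Set (Option A₁ × Option A₂) :=
      U ∩ {p | ∃ a₁ ∈ P, p.1 = some a₁} with hU1
    set U2 : Set (Option A₁ × Option A₂) :=
      U ∩ {p | ∃ a₁ ∈ Pᶜ, p.1 = some a₁} with hU2
    have key1 : setSum μL U ≤ setSum μLR U1 + setSum μLS U2 := by
      unfold setSum
      rw [tsum_subtype U μL, tsum_subtype U1 μLR, tsum_subtype U2 μLS,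
        ← ENNReal.tsum_add]
      apply ENNReal.tsum_le_tsum
      rintro ⟨o, b⟩
      by_cases hU : (o, b) ∈ U
      · rcases o with _ | a₁
        · calc U.indicator μL (none, b) ≤ μL (none, b) := Set.indicator_le_self _ _ _
            _ = 0 := rfl
            _ ≤ _ := zero_le
        · by_cases hP : a₁ ∈ P
          · have h1 : ((some a₁ : Option A₁), b) ∈ U1 := ⟨hU, a₁, hP, rfl⟩
            rw [Set.indicator_of_mem hU, Set.indicator_of_mem h1]
            have : μL (some a₁, b) = μLR (some a₁, b) := by simp [hμL, hP]
            rw [this]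
            exact le_add_right le_rfl
          · have h2 : ((some a₁ : Option A₁), b) ∈ U2 := ⟨hU, a₁, hP, rfl⟩
            rw [Set.indicator_of_mem hU, Set.indicator_of_mem h2]
            have : μL (some a₁, b) = μLS (some a₁, b) := by simp [hμL, hP]
            rw [this]
            exact le_add_left le_rfl
      · rw [Set.indicator_of_notMem hU]
        exact zero_le
    have key2 : setSum μRR U1 + setSum μRS U2 ≤ setSum μR U := by
      unfold setSum
      rw [tsum_subtype U μR, tsum_subtype U1 μRR, tsum_subtype U2 μRS,
        ← ENNReal.tsum_add]
      apply ENNReal.tsum_le_tsum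
      rintro ⟨o, b⟩
      by_cases h1 : (o, b) ∈ U1
      · obtain ⟨hU, a₁, hP, ho⟩ := h1
        simp only at ho
        subst ho
        have h2 : ((some a₁ : Option A₁), b) ∉ U2 := by
          rintro ⟨-, a₁', hP', ho'⟩
          simp only [Option.some.injEq] at ho'
          exact hP' (ho' ▸ hP)
        have hm1 : ((some a₁ : Option A₁), b) ∈ U1 := ⟨hU, a₁, hP, rfl⟩
        rw [Set.indicator_of_mem hm1, Set.indicator_of_notMem h2,
          Set.indicator_of_mem hU, add_zero]
        have : μR (some a₁, b) = μRR (some a₁, b) := if_pos hP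
        rw [this]
      · rw [Set.indicator_of_notMem h1, zero_add]
        by_cases h2 : (o, b) ∈ U2
        · obtain ⟨hU, a₁, hP, ho⟩ := h2
          simp only at ho
          subst ho
          have hm2 : ((some a₁ : Option A₁), b) ∈ U2 := ⟨hU, a₁, hP, rfl⟩
          rw [Set.indicator_of_mem hm2, Set.indicator_of_mem hU]
          have : μR (some a₁, b) = μRS (some a₁, b) := if_neg hP
          rw [this]
        · rw [Set.indicator_of_notMem h2]
          exact zero_le
    have hdd : ENNReal.ofReal δ + ENNReal.ofReal δ ≤ ENNReal.ofReal (2 * δ) := by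
      rcases le_or_gt 0 δ with hδ | hδ
      · rw [two_mul, ENNReal.ofReal_add hδ hδ]
      · simp [ENNReal.ofReal_of_nonpos hδ.le]
    calc setSum μL U ≤ setSum μLR U1 + setSum μLS U2 := key1
      _ ≤ (ENNReal.ofReal (Real.exp ε) * setSum μRR U1 + ENNReal.ofReal δ) +
          (ENNReal.ofReal (Real.exp ε) * setSum μRS U2 + ENNReal.ofReal δ) :=
            add_le_add (hRdist U1) (hSdist U2)
      _ = ENNReal.ofReal (Real.exp ε) * (setSum μRR U1 + setSum μRS U2) +
          (ENNReal.ofReal δ + ENNReal.ofReal δ) := by ring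
      _ ≤ ENNReal.ofReal (Real.exp ε) * setSum μR U + ENNReal.ofReal (2 * δ) :=
            add_le_add (mul_le_mul_right key2 _) hdd
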